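/- arXiv:2107.02510 — 3 statements merged into one kernel-verified Lean document; each statement's English description precedes it below -/
import Mathlib

section
/- Fix τ_1, τ_2 > 0. The function f_W(w) = (1/π) · (τ_1 √(w+τ_1²) + τ_2 √(w+τ_2²)) / (√(w+τ_1²) √(w+τ_2²) (w+τ_1²+τ_2²)) for w > 0 is a probability density on (0,∞): it is positive and ∫_0^∞ f_W(w) dw = 1. -/
open MeasureTheory Real Set Filter Topology

private lemma fW_hasDerivAt (τ₁ τ₂ : ℝ) (hτ₁ : 0 < τ₁) (hτ₂ : 0 < τ₂) (w : ℝ) (hw : 0 ≤ w) :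
    HasDerivAt (fun w : ℝ =>
      (2 / π) * (Real.arctan (Real.sqrt (w + τ₂ ^ 2) / τ₁)
        + Real.arctan (Real.sqrt (w + τ₁ ^ 2) / τ₂)))
      ((1 / π) * (τ₁ * Real.sqrt (w + τ₁ ^ 2) + τ₂ * Real.sqrt (w + τ₂ ^ 2)) /
        (Real.sqrt (w + τ₁ ^ 2) * Real.sqrt (w + τ₂ ^ 2) * (w + τ₁ ^ 2 + τ₂ ^ 2))) w := by
  have h1 : 0 < w + τ₁ ^ 2 := by positivity
  have h2 : 0 < w + τ₂ ^ 2 := by positivity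
  have s1 : 0 < Real.sqrt (w + τ₁ ^ 2) := Real.sqrt_pos.2 h1
  have s2 : 0 < Real.sqrt (w + τ₂ ^ 2) := Real.sqrt_pos.2 h2
  have hq1 : Real.sqrt (w + τ₁ ^ 2) ^ 2 = w + τ₁ ^ 2 := Real.sq_sqrt h1.le
  have hq2 : Real.sqrt (w + τ₂ ^ 2) ^ 2 = w + τ₂ ^ 2 := Real.sq_sqrt h2.le
  have d2 : HasDerivAt (fun w : ℝ => Real.arctan (Real.sqrt (w + τ₂ ^ 2) / τ₁))
      (1 / (1 + (Real.sqrt (w + τ₂ ^ 2) / τ₁) ^ 2) * ((1 / (2 * Real.sqrt (w + τ₂ ^ 2))) / τ₁))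
      w := by
    exact ((((hasDerivAt_id w).add_const (τ₂ ^ 2)).sqrt h2.ne').div_const τ₁).arctan
  have d1 : HasDerivAt (fun w : ℝ => Real.arctan (Real.sqrt (w + τ₁ ^ 2) / τ₂))
      (1 / (1 + (Real.sqrt (w + τ₁ ^ 2) / τ₂) ^ 2) * ((1 / (2 * Real.sqrt (w + τ₁ ^ 2))) / τ₂))
      w := by
    exact ((((hasDerivAt_id w).add_const (τ₁ ^ 2)).sqrt h1.ne').div_const τ₂).arctan
  have := ((d2.add d1).const_mul (2 / π))
  refine this.congr_deriv ?_
  have hπ : (0:ℝ) < π := Real.pi_pos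
  simp only [div_pow, hq1, hq2]
  field_simp
  ring

/-- The horseshoe-difference mixing function f_W is a
probability density on (0,∞): it is positive there and integrates to 1. -/
theorem fW_is_density (τ₁ τ₂ : ℝ) (hτ₁ : 0 < τ₁) (hτ₂ : 0 < τ₂) :
    (∀ w : ℝ, 0 < w →
      0 < (1 / π) * (τ₁ * Real.sqrt (w + τ₁ ^ 2) + τ₂ * Real.sqrt (w + τ₂ ^ 2)) /
          (Real.sqrt (w + τ₁ ^ 2) * Real.sqrt (w + τ₂ ^ 2) * (w + τ₁ ^ 2 + τ₂ ^ 2))) ∧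
    (∫ w in Ioi (0 : ℝ),
      (1 / π) * (τ₁ * Real.sqrt (w + τ₁ ^ 2) + τ₂ * Real.sqrt (w + τ₂ ^ 2)) /
        (Real.sqrt (w + τ₁ ^ 2) * Real.sqrt (w + τ₂ ^ 2) * (w + τ₁ ^ 2 + τ₂ ^ 2))) = 1 := by
  have hπ : (0:ℝ) < π := Real.pi_pos
  have hpos : ∀ w : ℝ, 0 < w →
      0 < (1 / π) * (τ₁ * Real.sqrt (w + τ₁ ^ 2) + τ₂ * Real.sqrt (w + τ₂ ^ 2)) /
          (Real.sqrt (w + τ₁ ^ 2) * Real.sqrt (w + τ₂ ^ 2) * (w + τ₁ ^ 2 + τ₂ ^ 2)) := by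
    intro w hw
    have h1 : 0 < w + τ₁ ^ 2 := by positivity
    have h2 : 0 < w + τ₂ ^ 2 := by positivity
    have s1 : 0 < Real.sqrt (w + τ₁ ^ 2) := Real.sqrt_pos.2 h1
    have s2 : 0 < Real.sqrt (w + τ₂ ^ 2) := Real.sqrt_pos.2 h2
    have h3 : 0 < w + τ₁ ^ 2 + τ₂ ^ 2 := by positivity
    positivity
  refine ⟨hpos, ?_⟩
  -- antiderivative
  set F : ℝ → ℝ := fun w =>
    (2 / π) * (Real.arctan (Real.sqrt (w + τ₂ ^ 2) / τ₁)
      + Real.arctan (Real.sqrt (w + τ₁ ^ 2) / τ₂)) with hF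
  have hderiv : ∀ w ∈ Ici (0:ℝ), HasDerivAt F
      ((1 / π) * (τ₁ * Real.sqrt (w + τ₁ ^ 2) + τ₂ * Real.sqrt (w + τ₂ ^ 2)) /
        (Real.sqrt (w + τ₁ ^ 2) * Real.sqrt (w + τ₂ ^ 2) * (w + τ₁ ^ 2 + τ₂ ^ 2))) w :=
    fun w hw => fW_hasDerivAt τ₁ τ₂ hτ₁ hτ₂ w hw
  have hsqrt : Tendsto Real.sqrt atTop atTop := by
    refine tendsto_atTop_atTop.2 fun b => ⟨(max b 0) ^ 2, fun a ha => ?_⟩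
    calc b ≤ max b 0 := le_max_left _ _
    _ = Real.sqrt ((max b 0) ^ 2) := (Real.sqrt_sq (le_max_right _ _)).symm
    _ ≤ Real.sqrt a := Real.sqrt_le_sqrt ha
  have htend : Tendsto F atTop (𝓝 2) := by
    have hs1 : Tendsto (fun w : ℝ => Real.sqrt (w + τ₁ ^ 2) / τ₂) atTop atTop := by
      apply Tendsto.atTop_div_const hτ₂
      exact hsqrt.comp (tendsto_atTop_add_const_right _ _ tendsto_id)
    have hs2 : Tendsto (fun w : ℝ => Real.sqrt (w + τ₂ ^ 2) / τ₁) atTop atTop := by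
      apply Tendsto.atTop_div_const hτ₁
      exact hsqrt.comp (tendsto_atTop_add_const_right _ _ tendsto_id)
    have ha1 : Tendsto (fun w : ℝ => Real.arctan (Real.sqrt (w + τ₁ ^ 2) / τ₂)) atTop
        (𝓝 (π / 2)) :=
      (tendsto_nhds_of_tendsto_nhdsWithin Real.tendsto_arctan_atTop).comp hs1
    have ha2 : Tendsto (fun w : ℝ => Real.arctan (Real.sqrt (w + τ₂ ^ 2) / τ₁)) atTop
        (𝓝 (π / 2)) :=
      (tendsto_nhds_of_tendsto_nhdsWithin Real.tendsto_arctan_atTop).comp hs2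
    have : Tendsto F atTop (𝓝 ((2 / π) * (π / 2 + π / 2))) :=
      ((ha2.add ha1).const_mul _)
    convert this using 2
    field_simp
    norm_num
  have key := integral_Ioi_of_hasDerivAt_of_nonneg' hderiv
    (fun w hw => (hpos w hw).le) htend
  rw [key]
  have hF0 : F 0 = 1 := by
    have e1 : Real.sqrt ((0:ℝ) + τ₁ ^ 2) = τ₁ := by
      rw [zero_add, Real.sqrt_sq hτ₁.le]
    have e2 : Real.sqrt ((0:ℝ) + τ₂ ^ 2) = τ₂ := by
      rw [zero_add, Real.sqrt_sq hτ₂.le]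
    have harc : Real.arctan (τ₂ / τ₁) + Real.arctan (τ₁ / τ₂) = π / 2 := by
      have : τ₁ / τ₂ = (τ₂ / τ₁)⁻¹ := by
        field_simp
      rw [this, Real.arctan_inv_of_pos (by positivity)]
      ring
    simp only [hF, e1, e2]
    rw [harc]
    field_simp
  rw [hF0]
  norm_num
end

section
/- Let μ_1 and μ_2 be independent with horseshoe distributions π_HS(σ, τ_1) and π_HS(σ, τ_2) respectively (i.e., μ_i | λ_i ~ N(0, σ²τ_i²λ_i²), λ_i ~ C⁺(0,1) independently). Then δ = (μ_1 − μ_2)/σ has density π_Δ(δ) = ∫_0^∞ N(δ | 0, w) f_W(w) dw, where f_W(w) = (1/π)(τ_1√(w+τ_1²) + τ_2√(w+τ_2²)) / (√(w+τ_1²)√(w+τ_2²)(w+τ_1²+τ_2²)). -/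
open MeasureTheory Real Set

/-- Horseshoe marginal density with scale στ. -/
noncomputable def horseshoeDensity (σ τ μ : ℝ) : ℝ :=
  ∫ l in Ioi (0 : ℝ),
    (2 * π * σ ^ 2 * τ ^ 2 * l ^ 2) ^ (-(1 : ℝ) / 2) *
      Real.exp (-(μ ^ 2) / (2 * σ ^ 2 * τ ^ 2 * l ^ 2)) *
      ((2 / π) * (1 + l ^ 2)⁻¹)

/-- Mixing density of the convolution of two horseshoe priors. -/
noncomputable def fW (τ₁ τ₂ w : ℝ) : ℝ :=
  if 0 < w then
    (1 / π) * (τ₁ * Real.sqrt (w + τ₁ ^ 2) + τ₂ * Real.sqrt (w + τ₂ ^ 2)) /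
      (Real.sqrt (w + τ₁ ^ 2) * Real.sqrt (w + τ₂ ^ 2) * (w + τ₁ ^ 2 + τ₂ ^ 2))
  else 0

/-- Density of the standardized difference of two independent horseshoes:
π_Δ(δ) = ∫₀^∞ N(δ | 0, w) f_W(w) dw. -/
noncomputable def piDelta (τ₁ τ₂ δ : ℝ) : ℝ :=
  ∫ w in Ioi (0 : ℝ),
    (2 * π * w) ^ (-(1 : ℝ) / 2) * Real.exp (-(δ ^ 2) / (2 * w)) * fW τ₁ τ₂ w

/-! ### Auxiliary definitions -/

/-- Centered Gaussian density with variance `w`. -/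
noncomputable def gg (w x : ℝ) : ℝ := (2 * π * w) ^ (-(1:ℝ)/2) * Real.exp (-(x^2)/(2*w))

/-- Standard half-Cauchy density. -/
noncomputable def hC (l : ℝ) : ℝ := 2/π * (1 + l^2)⁻¹

/-- Density of `τ²λ²` where `λ` is half-Cauchy. -/
noncomputable def gd (τ v : ℝ) : ℝ := 1/π * τ / ((τ^2 + v) * Real.sqrt v)

/-! ### Gaussian lemmas -/

lemma gg_eq (w x : ℝ) (hw : 0 < w) :
    gg w x = (Real.sqrt (2*π*w))⁻¹ * Real.exp (-(1/(2*w)) * x^2) := by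
  unfold gg
  have h1 : (2*π*w) ^ (-(1:ℝ)/2) = (Real.sqrt (2*π*w))⁻¹ := by
    rw [show (-(1:ℝ)/2) = -(1/2) by norm_num, Real.rpow_neg (by positivity),
      ← Real.sqrt_eq_rpow]
  rw [h1]
  congr 1
  congr 1
  field_simp

lemma gg_nonneg {w : ℝ} (hw : 0 < w) (x : ℝ) : 0 ≤ gg w x := by
  rw [gg_eq w x hw]
  positivity

lemma gg_integrable {w : ℝ} (hw : 0 < w) : Integrable (gg w) := by
  have : Integrable (fun x : ℝ => (Real.sqrt (2*π*w))⁻¹ * Real.exp (-(1/(2*w)) * x^2)) :=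
    (integrable_exp_neg_mul_sq (by positivity)).const_mul _
  exact this.congr (by filter_upwards with x using (gg_eq w x hw).symm)

lemma gg_integral {w : ℝ} (hw : 0 < w) : ∫ x, gg w x = 1 := by
  have h := integral_gaussian (1/(2*w))
  calc ∫ x, gg w x = ∫ x, (Real.sqrt (2*π*w))⁻¹ * Real.exp (-(1/(2*w)) * x^2) := by
        congr 1; ext x; exact gg_eq w x hw
    _ = (Real.sqrt (2*π*w))⁻¹ * Real.sqrt (π / (1/(2*w))) := by
        rw [MeasureTheory.integral_const_mul, h]
    _ = 1 := by
        rw [show π / (1/(2*w)) = 2*π*w by field_simp]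
        rw [inv_mul_cancel₀ (by positivity)]

lemma gg_prod (A B m : ℝ) (hA : 0 < A) (hB : 0 < B) (x : ℝ) :
    gg A x * gg B (x - m) = gg (A+B) m * gg (A*B/(A+B)) (x - A*m/(A+B)) := by
  have hAB : 0 < A + B := by positivity
  unfold gg
  rw [mul_mul_mul_comm, mul_mul_mul_comm ((2*π*(A+B)) ^ (-(1:ℝ)/2))]
  congr 1
  · rw [← Real.mul_rpow (by positivity) (by positivity),
      ← Real.mul_rpow (by positivity) (by positivity)]
    congr 1
    field_simp
  · rw [← Real.exp_add, ← Real.exp_add]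
    congr 1
    field_simp
    ring

lemma gg_meas : Measurable (fun p : ℝ × ℝ => gg p.1 p.2) := by
  unfold gg
  fun_prop

lemma gg_lintegral {w : ℝ} (hw : 0 < w) : ∫⁻ x, ENNReal.ofReal (gg w x) = 1 := by
  rw [← MeasureTheory.ofReal_integral_eq_lintegral_ofReal (gg_integrable hw)
    (Filter.Eventually.of_forall (gg_nonneg hw)), gg_integral hw, ENNReal.ofReal_one]

lemma gg_conv {A B : ℝ} (hA : 0 < A) (hB : 0 < B) (m : ℝ) :
    ∫⁻ x, ENNReal.ofReal (gg A x * gg B (x-m)) = ENNReal.ofReal (gg (A+B) m) := by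
  have hAB : 0 < A + B := by positivity
  have hV : 0 < A*B/(A+B) := by positivity
  have hint : Integrable (fun x => gg A x * gg B (x-m)) := by
    have h2 : Integrable (fun x => gg (A+B) m * gg (A*B/(A+B)) (x - A*m/(A+B))) :=
      ((gg_integrable hV).comp_sub_right _).const_mul _
    exact h2.congr (Filter.Eventually.of_forall fun x => (gg_prod A B m hA hB x).symm)
  rw [← MeasureTheory.ofReal_integral_eq_lintegral_ofReal hint
    (Filter.Eventually.of_forall fun x => mul_nonneg (gg_nonneg hA x) (gg_nonneg hB _))]
  congr 1
  calc ∫ x, gg A x * gg B (x-m)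
      = ∫ x, gg (A+B) m * gg (A*B/(A+B)) (x - A*m/(A+B)) := by
        exact integral_congr_ae (Filter.Eventually.of_forall fun x => gg_prod A B m hA hB x)
    _ = gg (A+B) m * ∫ x, gg (A*B/(A+B)) (x - A*m/(A+B)) := by
        rw [MeasureTheory.integral_const_mul]
    _ = gg (A+B) m := by
        rw [integral_sub_right_eq_self (gg (A*B/(A+B))) (A*m/(A+B)), gg_integral hV, mul_one]

lemma gg_scale {σ s : ℝ} (hσ : 0 < σ) (hs : 0 < s) (δ : ℝ) :
    σ * gg (σ^2*s) (σ*δ) = gg s δ := by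
  rw [gg_eq _ _ (by positivity), gg_eq _ _ hs]
  have h1 : Real.sqrt (2*π*(σ^2*s)) = σ * Real.sqrt (2*π*s) := by
    rw [show 2*π*(σ^2*s) = σ^2*(2*π*s) by ring, Real.sqrt_mul (by positivity),
      Real.sqrt_sq hσ.le]
  rw [h1]
  have h2 : -(1/(2*(σ^2*s))) * (σ*δ)^2 = -(1/(2*s)) * δ^2 := by
    field_simp
  rw [h2]
  have hss : Real.sqrt (2*π*s) ≠ 0 := by positivity
  field_simp

/-! ### Measurability -/

lemma hC_meas : Measurable hC := by unfold hC; fun_prop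

lemma gd_meas (τ : ℝ) : Measurable (gd τ) := by
  unfold gd
  fun_prop

lemma fW_meas (τ₁ τ₂ : ℝ) : Measurable (fW τ₁ τ₂) := by
  unfold fW
  exact Measurable.ite (measurableSet_Ioi (a := (0:ℝ))) (by fun_prop) measurable_const

lemma hC_nonneg (l : ℝ) : 0 ≤ hC l := by
  unfold hC
  have := Real.pi_pos
  positivity

lemma gd_nonneg {τ : ℝ} (hτ : 0 < τ) (v : ℝ) : 0 ≤ gd τ v := by
  unfold gd
  have hπ := Real.pi_pos
  rcases le_or_gt v 0 with hv | hv
  · rw [Real.sqrt_eq_zero'.mpr (by linarith), mul_zero, div_zero]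
  · positivity

lemma fW_nonneg {τ₁ τ₂ : ℝ} (h1 : 0 < τ₁) (h2 : 0 < τ₂) (w : ℝ) : 0 ≤ fW τ₁ τ₂ w := by
  unfold fW
  split_ifs with hw
  · have := Real.pi_pos
    positivity
  · exact le_refl 0

/-! ### Change of variables -/

lemma lintegral_image_eq_lintegral_abs_deriv_mul {s : Set ℝ} {f f' : ℝ → ℝ}
    (hs : MeasurableSet s) (hf' : ∀ x ∈ s, HasDerivWithinAt f (f' x) s x)
    (hf : InjOn f s) (g : ℝ → ENNReal) :
    ∫⁻ x in f '' s, g x = ∫⁻ x in s, ENNReal.ofReal |f' x| * g (f x) := by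
  simpa only [ContinuousLinearMap.det_toSpanSingleton] using
    lintegral_image_eq_lintegral_abs_det_fderiv_mul volume hs
      (fun x hx => (hf' x hx).hasFDerivWithinAt) hf g

lemma sq_map_Ioi {τ : ℝ} (hτ : 0 < τ) : (fun l : ℝ => τ^2*l^2) '' Ioi 0 = Ioi 0 := by
  ext v
  simp only [mem_image, mem_Ioi]
  constructor
  · rintro ⟨l, hl, rfl⟩
    positivity
  · intro hv
    refine ⟨Real.sqrt v / τ, by positivity, ?_⟩
    rw [div_pow, Real.sq_sqrt (le_of_lt hv)]
    field_simp

lemma rat_map_Ioi {w : ℝ} (hw : 0 < w) :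
    (fun t : ℝ => w*t^2/(1+t^2)) '' Ioi 0 = Ioo 0 w := by
  ext v
  simp only [mem_image, mem_Ioi, mem_Ioo]
  constructor
  · rintro ⟨t, ht, rfl⟩
    constructor
    · positivity
    · rw [div_lt_iff₀ (by positivity)]
      nlinarith
  · rintro ⟨hv0, hvw⟩
    have hwv : 0 < w - v := by linarith
    refine ⟨Real.sqrt (v/(w-v)), by positivity, ?_⟩
    have h1 : (Real.sqrt (v/(w-v)))^2 = v/(w-v) := Real.sq_sqrt (by positivity)
    rw [h1]
    field_simp
    ring

lemma integral_inv_quadratic {a b : ℝ} (ha : 0 < a) (hb : 0 < b) :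
    IntegrableOn (fun t => (a * t^2 + b)⁻¹) (Ioi (0:ℝ)) ∧
    ∫ t in Ioi (0:ℝ), (a * t^2 + b)⁻¹ = π / (2 * Real.sqrt (a*b)) := by
  set k : ℝ := Real.sqrt (a/b) with hk
  set c : ℝ := (Real.sqrt (a*b))⁻¹ with hc
  have hkpos : 0 < k := Real.sqrt_pos.2 (div_pos ha hb)
  have hsb : Real.sqrt b ^ 2 = b := Real.sq_sqrt hb.le
  have hk2 : k^2 = a / b := Real.sq_sqrt (div_pos ha hb).le
  have habpos : 0 < Real.sqrt (a*b) := Real.sqrt_pos.2 (mul_pos ha hb)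
  have hck : c * k = b⁻¹ := by
    have h1 : Real.sqrt (a*b) = Real.sqrt a * Real.sqrt b := Real.sqrt_mul ha.le b
    have h2 : k = Real.sqrt a / Real.sqrt b := by rw [hk, Real.sqrt_div ha.le]
    have h3 : Real.sqrt b * Real.sqrt b = b := Real.mul_self_sqrt hb.le
    have hsa : (0:ℝ) < Real.sqrt a := Real.sqrt_pos.2 ha
    have hsbp : (0:ℝ) < Real.sqrt b := Real.sqrt_pos.2 hb
    rw [hc, h1, h2]
    field_simp
    nlinarith [h3]
  have hderiv : ∀ t ∈ Ioi (0:ℝ), HasDerivAt (fun t => c * arctan (k * t)) ((a * t^2 + b)⁻¹) t := by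
    intro t _
    have h1 : HasDerivAt (fun t : ℝ => k * t) k t := by
      simpa using (hasDerivAt_id t).const_mul k
    have h2 := (Real.hasDerivAt_arctan (k * t)).comp t h1
    have h3 := h2.const_mul c
    refine h3.congr_deriv ?_
    rw [show c * (1 / (1 + (k*t)^2) * k) = (c*k) * (1 + (k*t)^2)⁻¹ by ring, hck, mul_pow, hk2,
      show (1 + a/b*t^2) = (a*t^2+b)/b by field_simp; ring]
    rw [inv_div]
    field_simp
  have htend : Filter.Tendsto (fun t => c * arctan (k * t)) Filter.atTop (nhds (c * (π/2))) := by
    have : Filter.Tendsto (fun t : ℝ => k * t) Filter.atTop Filter.atTop :=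
      Filter.Tendsto.const_mul_atTop hkpos Filter.tendsto_id
    exact ((Real.tendsto_arctan_atTop.mono_right nhdsWithin_le_nhds).comp this).const_mul c
  have hnonneg : ∀ t ∈ Ioi (0:ℝ), 0 ≤ (a * t^2 + b)⁻¹ := by
    intro t _; positivity
  have hcont : ContinuousWithinAt (fun t => c * arctan (k * t)) (Ici 0) 0 :=
    (Continuous.continuousWithinAt (by continuity))
  refine ⟨integrableOn_Ioi_deriv_of_nonneg hcont hderiv hnonneg htend, ?_⟩
  rw [integral_Ioi_of_hasDerivAt_of_nonneg hcont hderiv hnonneg htend]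
  simp only [mul_zero, Real.arctan_zero, sub_zero, hc]
  rw [inv_mul_eq_div]
  ring

lemma integral_inv_quadratic' {a b : ℝ} (ha : 0 < a) (hb : 0 < b) :
    ∫⁻ t in Ioi (0:ℝ), ENNReal.ofReal ((a * t^2 + b)⁻¹)
      = ENNReal.ofReal (π / (2 * Real.sqrt (a*b))) := by
  have h := integral_inv_quadratic ha hb
  rw [← h.2]
  exact (MeasureTheory.ofReal_integral_eq_lintegral_ofReal h.1
    (Filter.Eventually.of_forall fun t => by positivity)).symm

lemma hC_lintegral : ∫⁻ l in Ioi (0:ℝ), ENNReal.ofReal (hC l) = 1 := by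
  have h := integral_inv_quadratic' (a := 1) (b := 1) one_pos one_pos
  have hπ := Real.pi_pos
  calc ∫⁻ l in Ioi (0:ℝ), ENNReal.ofReal (hC l)
      = ∫⁻ l in Ioi (0:ℝ), ENNReal.ofReal (2/π) * ENNReal.ofReal ((1*l^2+1)⁻¹) := by
        apply lintegral_congr
        intro l
        rw [← ENNReal.ofReal_mul (by positivity)]
        unfold hC
        norm_num
        rw [add_comm]
    _ = ENNReal.ofReal (2/π) * ENNReal.ofReal (π / (2 * Real.sqrt (1*1))) := by
        rw [lintegral_const_mul' _ _ ENNReal.ofReal_ne_top, h]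
    _ = 1 := by
        rw [← ENNReal.ofReal_mul (by positivity)]
        rw [show 2/π * (π / (2 * Real.sqrt (1*1))) = 1 by
          rw [show Real.sqrt ((1:ℝ)*1) = 1 by norm_num]; field_simp]
        exact ENNReal.ofReal_one

lemma gd_cov {τ : ℝ} (hτ : 0 < τ) (Φ : ℝ → ENNReal) :
    ∫⁻ v in Ioi (0:ℝ), ENNReal.ofReal (gd τ v) * Φ v
      = ∫⁻ l in Ioi (0:ℝ), ENNReal.ofReal (hC l) * Φ (τ^2*l^2) := by
  have hderiv : ∀ l ∈ Ioi (0:ℝ), HasDerivWithinAt (fun l : ℝ => τ^2*l^2) (2*τ^2*l) (Ioi 0) l := by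
    intro l _
    have h : HasDerivAt (fun l : ℝ => τ^2*l^2) (τ^2*(2*l)) l := by
      simpa using (hasDerivAt_pow 2 l).const_mul (τ^2)
    have h' : HasDerivAt (fun l : ℝ => τ^2*l^2) (2*τ^2*l) l := by
      convert h using 1; ring
    exact h'.hasDerivWithinAt
  have hinj : InjOn (fun l : ℝ => τ^2*l^2) (Ioi 0) := by
    intro x hx y hy hxy
    have hx' : (0:ℝ) < x := hx
    have hy' : (0:ℝ) < y := hy
    simp only at hxy
    have : x^2 = y^2 := by
      have hτ2 : τ^2 ≠ 0 := by positivity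
      exact mul_left_cancel₀ hτ2 hxy
    nlinarith
  conv_lhs => rw [← sq_map_Ioi hτ]
  rw [_root_.lintegral_image_eq_lintegral_abs_deriv_mul measurableSet_Ioi hderiv hinj]
  apply setLIntegral_congr_fun measurableSet_Ioi
  intro l hl
  have hl' : (0:ℝ) < l := hl
  beta_reduce
  rw [← mul_assoc, ← ENNReal.ofReal_mul (abs_nonneg _)]
  congr 2
  have hsq : Real.sqrt (τ^2*l^2) = τ * l := by
    rw [show τ^2*l^2 = (τ*l)^2 by ring, Real.sqrt_sq (by positivity)]
  unfold gd hC
  rw [hsq, abs_of_pos (by positivity)]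
  have hπ := Real.pi_pos
  field_simp

lemma fW_lintegral {τ₁ τ₂ : ℝ} (h1 : 0 < τ₁) (h2 : 0 < τ₂) {w : ℝ} (hw : 0 < w) :
    ∫⁻ v in Ioo (0:ℝ) w, ENNReal.ofReal (gd τ₁ v * gd τ₂ (w - v))
      = ENNReal.ofReal (fW τ₁ τ₂ w) := by
  have hderiv : ∀ t ∈ Ioi (0:ℝ), HasDerivWithinAt (fun t : ℝ => w*t^2/(1+t^2))
      (2*w*t/(1+t^2)^2) (Ioi 0) t := by
    intro t ht
    have hd : HasDerivAt (fun t : ℝ => w*t^2/(1+t^2))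
        ((w*(2*t)*(1+t^2) - w*t^2*(2*t))/(1+t^2)^2) t := by
      have h1' : HasDerivAt (fun t : ℝ => w*t^2) (w*(2*t)) t := by
        simpa using ((hasDerivAt_pow 2 t).const_mul w)
      have h2' : HasDerivAt (fun t : ℝ => 1+t^2) (2*t) t := by
        simpa using ((hasDerivAt_pow 2 t).const_add 1)
      exact h1'.div h2' (by positivity)
    have : (w*(2*t)*(1+t^2) - w*t^2*(2*t))/(1+t^2)^2 = 2*w*t/(1+t^2)^2 := by
      field_simp; ring
    exact (this ▸ hd).hasDerivWithinAt
  have hinj : InjOn (fun t : ℝ => w*t^2/(1+t^2)) (Ioi 0) := by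
    intro x hx y hy hxy
    have hx' : (0:ℝ) < x := hx
    have hy' : (0:ℝ) < y := hy
    simp only at hxy
    have h3 : w*x^2*(1+y^2) = w*y^2*(1+x^2) := by
      field_simp at hxy
      linear_combination w * hxy
    have h4 : x^2 = y^2 := by nlinarith
    nlinarith
  rw [← rat_map_Ioi hw,
    _root_.lintegral_image_eq_lintegral_abs_deriv_mul measurableSet_Ioi hderiv hinj]
  have S : ℝ := w + τ₁^2 + τ₂^2
  have hS : (0:ℝ) < w + τ₁^2 + τ₂^2 := by positivity
  have hKpos : (0:ℝ) < 2*τ₁*τ₂/(π^2*(w + τ₁^2 + τ₂^2)) := by positivity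
  have hcongr : ∀ t ∈ Ioi (0:ℝ),
      ENNReal.ofReal |2*w*t/(1+t^2)^2| *
        ENNReal.ofReal (gd τ₁ ((fun t : ℝ => w*t^2/(1+t^2)) t)
          * gd τ₂ (w - (fun t : ℝ => w*t^2/(1+t^2)) t)) =
      ENNReal.ofReal ((2*τ₁*τ₂/(π^2*(w + τ₁^2 + τ₂^2))) *
        (((τ₁^2+w)*t^2+τ₁^2)⁻¹ + (τ₂^2*t^2+(τ₂^2+w))⁻¹)) := by
    intro t ht
    have ht' : (0:ℝ) < t := ht
    rw [← ENNReal.ofReal_mul (abs_nonneg _)]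
    congr 1
    simp only
    set u := Real.sqrt w with hudef
    set q := Real.sqrt (1+t^2) with hqdef
    have hu : u^2 = w := Real.sq_sqrt hw.le
    have hq : q^2 = 1+t^2 := Real.sq_sqrt (by positivity)
    have hupos : 0 < u := Real.sqrt_pos.2 hw
    have hqpos : 0 < q := Real.sqrt_pos.2 (by positivity)
    have hsv : Real.sqrt (w*t^2/(1+t^2)) = u*t/q := by
      rw [show w*t^2/(1+t^2) = (u*t/q)^2 by rw [div_pow, mul_pow, hu, hq]]
      exact Real.sqrt_sq (by positivity)
    have hsv2 : Real.sqrt (w - w*t^2/(1+t^2)) = u/q := by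
      rw [show w - w*t^2/(1+t^2) = (u/q)^2 by rw [div_pow, hu, hq]; field_simp; ring]
      exact Real.sqrt_sq (by positivity)
    unfold gd
    rw [hsv, hsv2, abs_of_pos (by positivity)]
    have hpi := Real.pi_pos
    have hA : (u*t/q)*(u/q) = w*t/(1+t^2) := by
      rw [← hu, ← hq]; ring
    have hB : 1/π*τ₁/((τ₁^2 + w*t^2/(1+t^2))*(u*t/q)) *
        (1/π*τ₂/((τ₂^2 + (w - w*t^2/(1+t^2)))*(u/q))) =
        τ₁*τ₂/(π^2*((τ₁^2 + w*t^2/(1+t^2))*(τ₂^2 + (w - w*t^2/(1+t^2))))*((u*t/q)*(u/q))) := by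
      have hwv : w - w*t^2/(1+t^2) = w/(1+t^2) := by field_simp; ring
      rw [hwv]
      have e1 : τ₁^2 + w*t^2/(1+t^2) ≠ 0 := by positivity
      have e2 : τ₂^2 + w/(1+t^2) ≠ 0 := by positivity
      field_simp
    rw [hB, hA]
    have hwv : w - w*t^2/(1+t^2) = w/(1+t^2) := by field_simp; ring
    rw [hwv]
    have e1 : τ₁^2 + w*t^2/(1+t^2) ≠ 0 := by positivity
    have e2 : τ₂^2 + w/(1+t^2) ≠ 0 := by positivity
    have e3 : (τ₁^2+w)*t^2+τ₁^2 ≠ 0 := by positivity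
    have e4 : τ₂^2*t^2+(τ₂^2+w) ≠ 0 := by positivity
    have e5 : w + τ₁^2 + τ₂^2 ≠ 0 := by positivity
    field_simp
    ring
  rw [setLIntegral_congr_fun measurableSet_Ioi hcongr]
  have hmeas1 : Measurable (fun t : ℝ => ENNReal.ofReal (((τ₁^2+w)*t^2+τ₁^2)⁻¹)) := by
    fun_prop
  calc ∫⁻ t in Ioi (0:ℝ), ENNReal.ofReal ((2*τ₁*τ₂/(π^2*(w + τ₁^2 + τ₂^2))) *
        ((((τ₁^2+w)*t^2+τ₁^2)⁻¹) + ((τ₂^2*t^2+(τ₂^2+w))⁻¹)))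
      = ∫⁻ t in Ioi (0:ℝ), ENNReal.ofReal (2*τ₁*τ₂/(π^2*(w + τ₁^2 + τ₂^2))) *
        (ENNReal.ofReal ((((τ₁^2+w)*t^2+τ₁^2)⁻¹)) +
         ENNReal.ofReal (((τ₂^2*t^2+(τ₂^2+w))⁻¹))) := by
        apply lintegral_congr
        intro t
        rw [ENNReal.ofReal_mul hKpos.le, ENNReal.ofReal_add (by positivity) (by positivity)]
    _ = ENNReal.ofReal (2*τ₁*τ₂/(π^2*(w + τ₁^2 + τ₂^2))) *
        ((∫⁻ t in Ioi (0:ℝ), ENNReal.ofReal ((((τ₁^2+w)*t^2+τ₁^2)⁻¹))) +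
         (∫⁻ t in Ioi (0:ℝ), ENNReal.ofReal (((τ₂^2*t^2+(τ₂^2+w))⁻¹)))) := by
        rw [lintegral_const_mul' _ _ ENNReal.ofReal_ne_top, lintegral_add_left hmeas1]
    _ = ENNReal.ofReal (fW τ₁ τ₂ w) := by
        rw [integral_inv_quadratic' (by positivity) (by positivity),
          integral_inv_quadratic' (by positivity) (by positivity)]
        rw [← ENNReal.ofReal_add (by positivity) (by positivity),
          ← ENNReal.ofReal_mul hKpos.le]
        congr 1
        have hs1 : Real.sqrt ((τ₁^2+w)*τ₁^2) = Real.sqrt (w+τ₁^2) * τ₁ := by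
          rw [Real.sqrt_mul (by positivity), Real.sqrt_sq h1.le, add_comm]
        have hs2 : Real.sqrt (τ₂^2*(τ₂^2+w)) = τ₂ * Real.sqrt (w+τ₂^2) := by
          rw [Real.sqrt_mul (by positivity), Real.sqrt_sq h2.le, add_comm (τ₂^2) w]
        rw [hs1, hs2]
        unfold fW
        rw [if_pos hw]
        have p1 : (0:ℝ) < Real.sqrt (w+τ₁^2) := Real.sqrt_pos.2 (by positivity)
        have p2 : (0:ℝ) < Real.sqrt (w+τ₂^2) := Real.sqrt_pos.2 (by positivity)
        have hpi := Real.pi_pos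
        field_simp
        ring


lemma shear (c : ℝ) (ψ : ℝ → ENNReal) (hψ : Measurable ψ) :
    ∫⁻ v in Ioi (0:ℝ), ψ (c + v) = ∫⁻ w in Ioi c, ψ w := by
  rw [← lintegral_indicator measurableSet_Ioi, ← lintegral_indicator measurableSet_Ioi]
  have heq : ∀ v : ℝ, (Ioi (0:ℝ)).indicator (fun v => ψ (c+v)) v
      = ((Ioi c).indicator ψ) (c + v) := by
    intro v
    by_cases hv : v ∈ Ioi (0:ℝ)
    · rw [indicator_of_mem hv, indicator_of_mem (by simpa using hv)]
    · rw [indicator_of_notMem hv, indicator_of_notMem (by simpa using hv)]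
  rw [lintegral_congr heq]
  exact lintegral_add_left_eq_self ((Ioi c).indicator ψ) c

lemma swap_region (F : ℝ → ℝ → ENNReal) (hF : Measurable (Function.uncurry F)) :
    ∫⁻ v in Ioi (0:ℝ), ∫⁻ w in Ioi v, F v w
      = ∫⁻ w in Ioi (0:ℝ), ∫⁻ v in Ioo 0 w, F v w := by
  set G : ℝ → ℝ → ENNReal := fun v w => if 0 < v ∧ v < w then F v w else 0 with hG
  have hGmeas : Measurable (Function.uncurry G) := by
    rw [hG]
    apply Measurable.ite _ hF measurable_const
    exact MeasurableSet.inter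
      (measurable_fst measurableSet_Ioi)
      (measurableSet_lt measurable_fst measurable_snd)
  have h1 : ∫⁻ v in Ioi (0:ℝ), ∫⁻ w in Ioi v, F v w = ∫⁻ v, ∫⁻ w, G v w := by
    rw [← lintegral_indicator measurableSet_Ioi]
    apply lintegral_congr
    intro v
    by_cases hv : v ∈ Ioi (0:ℝ)
    · rw [indicator_of_mem hv, ← lintegral_indicator measurableSet_Ioi]
      apply lintegral_congr
      intro w
      by_cases hw : w ∈ Ioi v
      · rw [indicator_of_mem hw, hG]
        simp only
        rw [if_pos ⟨hv, hw⟩]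
      · rw [indicator_of_notMem hw, hG]
        simp only
        rw [if_neg (fun h => hw h.2)]
    · rw [indicator_of_notMem hv]
      symm
      simp only [hG]
      rw [show (∫⁻ w, if 0 < v ∧ v < w then F v w else 0) = ∫⁻ _, 0 from
        lintegral_congr fun w => if_neg (fun h => hv h.1)]
      simp
  have h2 : ∫⁻ w in Ioi (0:ℝ), ∫⁻ v in Ioo 0 w, F v w = ∫⁻ w, ∫⁻ v, G v w := by
    rw [← lintegral_indicator measurableSet_Ioi]
    apply lintegral_congr
    intro w
    by_cases hw : w ∈ Ioi (0:ℝ)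
    · rw [indicator_of_mem hw, ← lintegral_indicator measurableSet_Ioo]
      apply lintegral_congr
      intro v
      by_cases hv : v ∈ Ioo (0:ℝ) w
      · rw [indicator_of_mem hv, hG]
        simp only
        rw [if_pos ⟨hv.1, hv.2⟩]
      · rw [indicator_of_notMem hv, hG]
        simp only
        rw [if_neg (fun h => hv ⟨h.1, h.2⟩)]
    · rw [indicator_of_notMem hw]
      symm
      simp only [hG]
      rw [show (∫⁻ v, if 0 < v ∧ v < w then F v w else 0) = ∫⁻ _, 0 from
        lintegral_congr fun v => if_neg (fun h => hw (lt_trans h.1 h.2))]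
      simp
  rw [h1, h2]
  exact lintegral_lintegral_swap hGmeas.aemeasurable

lemma lintegral_comp_affine {G : ℝ → ENNReal} (hG : Measurable G) {c : ℝ} (hc : c ≠ 0) (x : ℝ) :
    ∫⁻ y, G y = ENNReal.ofReal |c| * ∫⁻ δ, G (x - c*δ) := by
  have hm : Measurable fun t : ℝ => G (x - t) :=
    hG.comp (measurable_const.sub measurable_id)
  have hm2 : Measurable fun t : ℝ => x - t := measurable_const.sub measurable_id
  have h1 : ∫⁻ δ, G (x - c*δ) = ∫⁻ t, G (x - t) ∂(Measure.map (fun t : ℝ => c * t) volume) := by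
    rw [lintegral_map hm (measurable_const_mul c)]
  have h2 : ∫⁻ t, G (x - t) = ∫⁻ y, G y := by
    conv_rhs => rw [show volume = Measure.map (fun t : ℝ => x - t) volume from
      (Measure.map_sub_left_eq_self volume x).symm]
    rw [lintegral_map hG hm2]
  rw [h1, Real.map_volume_mul_left hc, lintegral_smul_measure, smul_eq_mul, h2, ← mul_assoc,
    ← ENNReal.ofReal_mul (abs_nonneg _), ← abs_mul, mul_inv_cancel₀ hc]
  simp

/-! ### The horseshoe density as a lintegral -/

/-- ENNReal version of the horseshoe density. -/
noncomputable def LL (σ τ : ℝ) (x : ℝ) : ENNReal :=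
  ∫⁻ l in Ioi (0:ℝ), ENNReal.ofReal (gg (σ^2*τ^2*l^2) x * hC l)

lemma LL_integrand_meas (σ τ : ℝ) :
    Measurable (fun p : ℝ × ℝ => ENNReal.ofReal (gg (σ^2*τ^2*p.2^2) p.1 * hC p.2)) := by
  apply Measurable.ennreal_ofReal
  apply Measurable.mul
  · exact gg_meas.comp ((measurable_const.mul (measurable_snd.pow_const 2)).prodMk measurable_fst)
  · exact hC_meas.comp measurable_snd

lemma LL_meas (σ τ : ℝ) : Measurable (LL σ τ) :=
  Measurable.lintegral_prod_right' (f := fun p : ℝ × ℝ =>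
    ENNReal.ofReal (gg (σ^2*τ^2*p.2^2) p.1 * hC p.2)) (LL_integrand_meas σ τ)

lemma horseshoe_eq (σ τ x : ℝ) :
    horseshoeDensity σ τ x = ∫ l in Ioi (0:ℝ), gg (σ^2*τ^2*l^2) x * hC l := by
  unfold horseshoeDensity gg hC
  apply setIntegral_congr_fun measurableSet_Ioi
  intro l _
  simp only
  rw [show 2*π*σ^2*τ^2*l^2 = 2*π*(σ^2*τ^2*l^2) by ring,
    show 2*σ^2*τ^2*l^2 = 2*(σ^2*τ^2*l^2) by ring]

lemma LL_total {σ τ : ℝ} (hσ : 0 < σ) (hτ : 0 < τ) : ∫⁻ x, LL σ τ x = 1 := by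
  unfold LL
  rw [lintegral_lintegral_swap (LL_integrand_meas σ τ).aemeasurable]
  calc ∫⁻ l in Ioi (0:ℝ), ∫⁻ x, ENNReal.ofReal (gg (σ^2*τ^2*l^2) x * hC l)
      = ∫⁻ l in Ioi (0:ℝ), ENNReal.ofReal (hC l) := by
        apply setLIntegral_congr_fun measurableSet_Ioi
        intro l hl
        have hl' : (0:ℝ) < l := hl
        have hw : 0 < σ^2*τ^2*l^2 := by positivity
        calc ∫⁻ x, ENNReal.ofReal (gg (σ^2*τ^2*l^2) x * hC l)
            = ∫⁻ x, ENNReal.ofReal (gg (σ^2*τ^2*l^2) x) * ENNReal.ofReal (hC l) := by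
              apply lintegral_congr
              intro x
              rw [ENNReal.ofReal_mul (gg_nonneg hw x)]
          _ = 1 * ENNReal.ofReal (hC l) := by
              rw [lintegral_mul_const _ (by
                apply Measurable.ennreal_ofReal
                exact gg_meas.comp (measurable_const.prodMk measurable_id)), gg_lintegral hw]
          _ = ENNReal.ofReal (hC l) := one_mul _
    _ = 1 := hC_lintegral

lemma ae_LL {σ τ : ℝ} (hσ : 0 < σ) (hτ : 0 < τ) :
    (fun x => ENNReal.ofReal (horseshoeDensity σ τ x)) =ᵐ[volume] LL σ τ := by
  have hfin : ∀ᵐ x, LL σ τ x < ⊤ := by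
    apply ae_lt_top (LL_meas σ τ)
    rw [LL_total hσ hτ]
    exact ENNReal.one_ne_top
  filter_upwards [hfin] with x hx
  have hnn : 0 ≤ᵐ[volume.restrict (Ioi (0:ℝ))] fun l => gg (σ^2*τ^2*l^2) x * hC l := by
    filter_upwards [ae_restrict_mem measurableSet_Ioi] with l hl
    have hl' : (0:ℝ) < l := hl
    exact mul_nonneg (gg_nonneg (by positivity) x) (hC_nonneg l)
  have hmeas : Measurable fun l => gg (σ^2*τ^2*l^2) x * hC l := by
    apply Measurable.mul _ hC_meas
    exact gg_meas.comp ((measurable_const.mul (measurable_id.pow_const 2)).prodMk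
      measurable_const)
  have hInt : IntegrableOn (fun l => gg (σ^2*τ^2*l^2) x * hC l) (Ioi 0) := by
    refine ⟨hmeas.aestronglyMeasurable.restrict, ?_⟩
    rw [hasFiniteIntegral_iff_ofReal hnn]
    exact hx
  rw [horseshoe_eq, MeasureTheory.ofReal_integral_eq_lintegral_ofReal hInt hnn]
  rfl

lemma D_val {σ τ₁ τ₂ : ℝ} (hσ : 0 < σ) (h1 : 0 < τ₁) (h2 : 0 < τ₂) (δ : ℝ) :
    ENNReal.ofReal σ * ∫⁻ x, LL σ τ₁ x * LL σ τ₂ (x - σ*δ)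
      = ∫⁻ w in Ioi (0:ℝ), ENNReal.ofReal (gg w δ * fW τ₁ τ₂ w) := by
  -- the triple integrand
  have hφ3 : Measurable (fun q : (ℝ × ℝ) × ℝ =>
      ENNReal.ofReal (gg (σ^2*τ₁^2*q.1.2^2) q.1.1 * hC q.1.2) *
      ENNReal.ofReal (gg (σ^2*τ₂^2*q.2^2) (q.1.1 - σ*δ) * hC q.2)) := by
    apply Measurable.mul
      (f := fun q : (ℝ × ℝ) × ℝ => ENNReal.ofReal (gg (σ^2*τ₁^2*q.1.2^2) q.1.1 * hC q.1.2))
      (g := fun q : (ℝ × ℝ) × ℝ => ENNReal.ofReal (gg (σ^2*τ₂^2*q.2^2) (q.1.1 - σ*δ) * hC q.2))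
    · apply Measurable.ennreal_ofReal
      exact (gg_meas.comp ((measurable_const.mul ((measurable_fst.snd).pow_const 2)).prodMk
        measurable_fst.fst)).mul (hC_meas.comp measurable_fst.snd)
    · apply Measurable.ennreal_ofReal
      exact (gg_meas.comp ((measurable_const.mul (measurable_snd.pow_const 2)).prodMk
        (measurable_fst.fst.sub measurable_const))).mul (hC_meas.comp measurable_snd)
  have hφ2 : ∀ l₁ : ℝ, Measurable (fun p : ℝ × ℝ =>
      ENNReal.ofReal (gg (σ^2*τ₁^2*l₁^2) p.1 * hC l₁) *
      ENNReal.ofReal (gg (σ^2*τ₂^2*p.2^2) (p.1 - σ*δ) * hC p.2)) := by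
    intro l₁
    apply Measurable.mul
      (f := fun p : ℝ × ℝ => ENNReal.ofReal (gg (σ^2*τ₁^2*l₁^2) p.1 * hC l₁))
      (g := fun p : ℝ × ℝ => ENNReal.ofReal (gg (σ^2*τ₂^2*p.2^2) (p.1 - σ*δ) * hC p.2))
    · apply Measurable.ennreal_ofReal
      exact (gg_meas.comp (measurable_const.prodMk measurable_fst)).mul measurable_const
    · apply Measurable.ennreal_ofReal
      exact (gg_meas.comp ((measurable_const.mul (measurable_snd.pow_const 2)).prodMk
        (measurable_fst.sub measurable_const))).mul (hC_meas.comp measurable_snd)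
  have hswapm : Measurable (fun p : ℝ × ℝ => ∫⁻ l₂ in Ioi (0:ℝ),
      ENNReal.ofReal (gg (σ^2*τ₁^2*p.2^2) p.1 * hC p.2) *
      ENNReal.ofReal (gg (σ^2*τ₂^2*l₂^2) (p.1 - σ*δ) * hC l₂)) := by
    apply Measurable.lintegral_prod_right' (f := fun q : (ℝ × ℝ) × ℝ =>
      ENNReal.ofReal (gg (σ^2*τ₁^2*q.1.2^2) q.1.1 * hC q.1.2) *
      ENNReal.ofReal (gg (σ^2*τ₂^2*q.2^2) (q.1.1 - σ*δ) * hC q.2))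
    exact hφ3
  calc ENNReal.ofReal σ * ∫⁻ x, LL σ τ₁ x * LL σ τ₂ (x - σ*δ)
      = ENNReal.ofReal σ * ∫⁻ x, ∫⁻ l₁ in Ioi (0:ℝ), ∫⁻ l₂ in Ioi (0:ℝ),
          ENNReal.ofReal (gg (σ^2*τ₁^2*l₁^2) x * hC l₁) *
          ENNReal.ofReal (gg (σ^2*τ₂^2*l₂^2) (x - σ*δ) * hC l₂) := by
        congr 1
        apply lintegral_congr
        intro x
        unfold LL
        rw [← lintegral_mul_const _ (by
          apply Measurable.ennreal_ofReal
          exact (gg_meas.comp ((measurable_const.mul (measurable_id.pow_const 2)).prodMk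
            measurable_const)).mul hC_meas)]
        apply lintegral_congr
        intro l₁
        rw [← lintegral_const_mul' _ _ ENNReal.ofReal_ne_top]
    _ = ENNReal.ofReal σ * ∫⁻ l₁ in Ioi (0:ℝ), ∫⁻ x, ∫⁻ l₂ in Ioi (0:ℝ),
          ENNReal.ofReal (gg (σ^2*τ₁^2*l₁^2) x * hC l₁) *
          ENNReal.ofReal (gg (σ^2*τ₂^2*l₂^2) (x - σ*δ) * hC l₂) := by
        congr 1
        exact lintegral_lintegral_swap hswapm.aemeasurable
    _ = ENNReal.ofReal σ * ∫⁻ l₁ in Ioi (0:ℝ), ∫⁻ l₂ in Ioi (0:ℝ), ∫⁻ x,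
          ENNReal.ofReal (gg (σ^2*τ₁^2*l₁^2) x * hC l₁) *
          ENNReal.ofReal (gg (σ^2*τ₂^2*l₂^2) (x - σ*δ) * hC l₂) := by
        congr 1
        apply lintegral_congr
        intro l₁
        exact lintegral_lintegral_swap (hφ2 l₁).aemeasurable
    _ = ∫⁻ l₁ in Ioi (0:ℝ), ∫⁻ l₂ in Ioi (0:ℝ),
          ENNReal.ofReal (hC l₁ * hC l₂ * gg (τ₁^2*l₁^2+τ₂^2*l₂^2) δ) := by
        rw [← lintegral_const_mul' _ _ ENNReal.ofReal_ne_top]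
        apply setLIntegral_congr_fun measurableSet_Ioi
        intro l₁ hl₁
        beta_reduce
        rw [← lintegral_const_mul' _ _ ENNReal.ofReal_ne_top]
        apply setLIntegral_congr_fun measurableSet_Ioi
        intro l₂ hl₂
        have hl₁' : (0:ℝ) < l₁ := hl₁
        have hl₂' : (0:ℝ) < l₂ := hl₂
        have hA : 0 < σ^2*τ₁^2*l₁^2 := by positivity
        have hB : 0 < σ^2*τ₂^2*l₂^2 := by positivity
        have hs : 0 < τ₁^2*l₁^2+τ₂^2*l₂^2 := by positivity
        calc ENNReal.ofReal σ * ∫⁻ x,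
              ENNReal.ofReal (gg (σ^2*τ₁^2*l₁^2) x * hC l₁) *
              ENNReal.ofReal (gg (σ^2*τ₂^2*l₂^2) (x - σ*δ) * hC l₂)
            = ENNReal.ofReal σ * ∫⁻ x, ENNReal.ofReal (hC l₁ * hC l₂) *
              ENNReal.ofReal (gg (σ^2*τ₁^2*l₁^2) x * gg (σ^2*τ₂^2*l₂^2) (x - σ*δ)) := by
              congr 1
              apply lintegral_congr
              intro x
              rw [← ENNReal.ofReal_mul (mul_nonneg (gg_nonneg hA x) (hC_nonneg l₁)),
                ← ENNReal.ofReal_mul (mul_nonneg (hC_nonneg l₁) (hC_nonneg l₂))]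
              congr 1
              ring
          _ = ENNReal.ofReal σ * (ENNReal.ofReal (hC l₁ * hC l₂) *
              ENNReal.ofReal (gg (σ^2*τ₁^2*l₁^2 + σ^2*τ₂^2*l₂^2) (σ*δ))) := by
              rw [lintegral_const_mul' _ _ ENNReal.ofReal_ne_top, gg_conv hA hB]
          _ = ENNReal.ofReal (hC l₁ * hC l₂ * gg (τ₁^2*l₁^2+τ₂^2*l₂^2) δ) := by
              rw [← ENNReal.ofReal_mul (mul_nonneg (hC_nonneg l₁) (hC_nonneg l₂)),
                ← ENNReal.ofReal_mul hσ.le]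
              congr 1
              rw [show σ^2*τ₁^2*l₁^2 + σ^2*τ₂^2*l₂^2 = σ^2*(τ₁^2*l₁^2+τ₂^2*l₂^2) by ring,
                ← gg_scale hσ hs δ]
              ring
    _ = ∫⁻ l₁ in Ioi (0:ℝ), ENNReal.ofReal (hC l₁) *
          ∫⁻ v₂ in Ioi (0:ℝ), ENNReal.ofReal (gd τ₂ v₂ * gg (τ₁^2*l₁^2+v₂) δ) := by
        apply setLIntegral_congr_fun measurableSet_Ioi
        intro l₁ hl₁
        calc ∫⁻ l₂ in Ioi (0:ℝ), ENNReal.ofReal (hC l₁ * hC l₂ * gg (τ₁^2*l₁^2+τ₂^2*l₂^2) δ)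
            = ∫⁻ l₂ in Ioi (0:ℝ), ENNReal.ofReal (hC l₂) *
                ENNReal.ofReal (hC l₁ * gg (τ₁^2*l₁^2+τ₂^2*l₂^2) δ) := by
              apply lintegral_congr
              intro l₂
              rw [← ENNReal.ofReal_mul (hC_nonneg l₂)]
              congr 1
              ring
          _ = ∫⁻ v₂ in Ioi (0:ℝ), ENNReal.ofReal (gd τ₂ v₂) *
                ENNReal.ofReal (hC l₁ * gg (τ₁^2*l₁^2+v₂) δ) :=
              (gd_cov h2 (fun v => ENNReal.ofReal (hC l₁ * gg (τ₁^2*l₁^2+v) δ))).symm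
          _ = ∫⁻ v₂ in Ioi (0:ℝ), ENNReal.ofReal (hC l₁) *
                ENNReal.ofReal (gd τ₂ v₂ * gg (τ₁^2*l₁^2+v₂) δ) := by
              apply lintegral_congr
              intro v₂
              rw [← ENNReal.ofReal_mul (gd_nonneg h2 v₂), ← ENNReal.ofReal_mul (hC_nonneg l₁)]
              congr 1
              ring
          _ = ENNReal.ofReal (hC l₁) *
                ∫⁻ v₂ in Ioi (0:ℝ), ENNReal.ofReal (gd τ₂ v₂ * gg (τ₁^2*l₁^2+v₂) δ) :=
              lintegral_const_mul' _ _ ENNReal.ofReal_ne_top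
    _ = ∫⁻ v₁ in Ioi (0:ℝ), ENNReal.ofReal (gd τ₁ v₁) *
          ∫⁻ v₂ in Ioi (0:ℝ), ENNReal.ofReal (gd τ₂ v₂ * gg (v₁+v₂) δ) :=
        (gd_cov h1 (fun v₁ => ∫⁻ v₂ in Ioi (0:ℝ),
          ENNReal.ofReal (gd τ₂ v₂ * gg (v₁+v₂) δ))).symm
    _ = ∫⁻ v₁ in Ioi (0:ℝ), ∫⁻ w in Ioi v₁,
          ENNReal.ofReal (gd τ₁ v₁ * (gd τ₂ (w - v₁) * gg w δ)) := by
        apply setLIntegral_congr_fun measurableSet_Ioi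
        intro v₁ hv₁
        have hψ : Measurable (fun w => ENNReal.ofReal (gd τ₂ (w - v₁) * gg w δ)) := by
          apply Measurable.ennreal_ofReal
          exact ((gd_meas τ₂).comp (measurable_id.sub measurable_const)).mul
            (gg_meas.comp (measurable_id.prodMk measurable_const))
        calc ENNReal.ofReal (gd τ₁ v₁) *
              ∫⁻ v₂ in Ioi (0:ℝ), ENNReal.ofReal (gd τ₂ v₂ * gg (v₁+v₂) δ)
            = ENNReal.ofReal (gd τ₁ v₁) *
              ∫⁻ v₂ in Ioi (0:ℝ), ENNReal.ofReal (gd τ₂ (v₁+v₂-v₁) * gg (v₁+v₂) δ) := by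
              congr 1
              apply lintegral_congr
              intro v₂
              rw [add_sub_cancel_left]
          _ = ENNReal.ofReal (gd τ₁ v₁) * ∫⁻ w in Ioi v₁,
              ENNReal.ofReal (gd τ₂ (w - v₁) * gg w δ) := by
              congr 1
              exact shear v₁ (fun w => ENNReal.ofReal (gd τ₂ (w - v₁) * gg w δ)) hψ
          _ = ∫⁻ w in Ioi v₁, ENNReal.ofReal (gd τ₁ v₁ * (gd τ₂ (w - v₁) * gg w δ)) := by
              rw [← lintegral_const_mul' _ _ ENNReal.ofReal_ne_top]
              apply lintegral_congr
              intro w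
              rw [← ENNReal.ofReal_mul (gd_nonneg h1 v₁)]
    _ = ∫⁻ w in Ioi (0:ℝ), ∫⁻ v in Ioo (0:ℝ) w,
          ENNReal.ofReal (gd τ₁ v * (gd τ₂ (w - v) * gg w δ)) := by
        apply swap_region
        apply Measurable.ennreal_ofReal
        refine ((gd_meas τ₁).comp measurable_fst).mul ?_
        exact ((gd_meas τ₂).comp (measurable_snd.sub measurable_fst)).mul
          (gg_meas.comp (measurable_snd.prodMk measurable_const))
    _ = ∫⁻ w in Ioi (0:ℝ), ENNReal.ofReal (gg w δ * fW τ₁ τ₂ w) := by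
        apply setLIntegral_congr_fun measurableSet_Ioi
        intro w hw
        have hw' : (0:ℝ) < w := hw
        calc ∫⁻ v in Ioo (0:ℝ) w, ENNReal.ofReal (gd τ₁ v * (gd τ₂ (w - v) * gg w δ))
            = ∫⁻ v in Ioo (0:ℝ) w, ENNReal.ofReal (gg w δ) *
                ENNReal.ofReal (gd τ₁ v * gd τ₂ (w - v)) := by
              apply lintegral_congr
              intro v
              rw [← ENNReal.ofReal_mul (gg_nonneg hw' δ)]
              congr 1
              ring
          _ = ENNReal.ofReal (gg w δ) * ENNReal.ofReal (fW τ₁ τ₂ w) := by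
              rw [lintegral_const_mul' _ _ ENNReal.ofReal_ne_top, fW_lintegral h1 h2 hw']
          _ = ENNReal.ofReal (gg w δ * fW τ₁ τ₂ w) :=
              (ENNReal.ofReal_mul (gg_nonneg hw' δ)).symm

/-- If μ₁, μ₂ are independent with horseshoe distributions
π_HS(σ,τ₁), π_HS(σ,τ₂), then δ = (μ₁ − μ₂)/σ has density π_Δ. -/
theorem horseshoe_difference_density
    {Ω : Type*} [MeasurableSpace Ω] (ℙ : Measure Ω) [IsProbabilityMeasure ℙ]
    (σ τ₁ τ₂ : ℝ) (hσ : 0 < σ) (hτ₁ : 0 < τ₁) (hτ₂ : 0 < τ₂)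
    (μ₁ μ₂ : Ω → ℝ) (hm₁ : Measurable μ₁) (hm₂ : Measurable μ₂)
    (hindep : ProbabilityTheory.IndepFun μ₁ μ₂ ℙ)
    (hlaw₁ : Measure.map μ₁ ℙ =
      volume.withDensity (fun x => ENNReal.ofReal (horseshoeDensity σ τ₁ x)))
    (hlaw₂ : Measure.map μ₂ ℙ =
      volume.withDensity (fun x => ENNReal.ofReal (horseshoeDensity σ τ₂ x))) :
    Measure.map (fun ω => (μ₁ ω - μ₂ ω) / σ) ℙ =
      volume.withDensity (fun δ => ENNReal.ofReal (piDelta τ₁ τ₂ δ)) := by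
  have hT : Measurable (fun p : ℝ × ℝ => (p.1 - p.2)/σ) :=
    (measurable_fst.sub measurable_snd).div_const σ
  have hlaw₁' : Measure.map μ₁ ℙ = volume.withDensity (LL σ τ₁) :=
    hlaw₁.trans (withDensity_congr_ae (ae_LL hσ hτ₁))
  have hlaw₂' : Measure.map μ₂ ℙ = volume.withDensity (LL σ τ₂) :=
    hlaw₂.trans (withDensity_congr_ae (ae_LL hσ hτ₂))
  have hmapeq : Measure.map (fun ω => (μ₁ ω - μ₂ ω)/σ) ℙ
      = Measure.map (fun p : ℝ × ℝ => (p.1 - p.2)/σ)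
        ((volume.withDensity (LL σ τ₁)).prod (volume.withDensity (LL σ τ₂))) := by
    rw [← hlaw₁', ← hlaw₂',
      ← (ProbabilityTheory.indepFun_iff_map_prod_eq_prod_map_map
        hm₁.aemeasurable hm₂.aemeasurable).mp hindep,
      Measure.map_map hT (hm₁.prodMk hm₂)]
    rfl
  -- the density of the difference
  have hD : Measure.map (fun p : ℝ × ℝ => (p.1 - p.2)/σ)
      ((volume.withDensity (LL σ τ₁)).prod (volume.withDensity (LL σ τ₂)))
      = volume.withDensity
          (fun δ => ENNReal.ofReal σ * ∫⁻ x, LL σ τ₁ x * LL σ τ₂ (x - σ*δ)) := by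
    refine Measure.ext fun s hs => ?_
    rw [Measure.map_apply hT hs, withDensity_apply _ hs, Measure.prod_apply (hT hs)]
    have hslice : ∀ x : ℝ,
        (volume.withDensity (LL σ τ₂))
          (Prod.mk x ⁻¹' ((fun p : ℝ × ℝ => (p.1 - p.2)/σ) ⁻¹' s))
        = ENNReal.ofReal σ * ∫⁻ d, LL σ τ₂ (x - σ*d) * s.indicator 1 d := by
      intro x
      have hpre : MeasurableSet (Prod.mk x ⁻¹' ((fun p : ℝ × ℝ => (p.1 - p.2)/σ) ⁻¹' s)) :=
        (hT hs).preimage measurable_prodMk_left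
      have hGmeas : Measurable (fun y => LL σ τ₂ y * s.indicator 1 ((x - y)/σ)) :=
        (LL_meas σ τ₂).mul ((measurable_one.indicator hs).comp
          ((measurable_const.sub measurable_id).div_const σ))
      rw [withDensity_apply _ hpre, ← lintegral_indicator hpre]
      rw [lintegral_congr (g := fun y => LL σ τ₂ y * s.indicator 1 ((x - y)/σ))
        (fun y => by
          by_cases hy : (x - y)/σ ∈ s
          · have hmem : y ∈ Prod.mk x ⁻¹' ((fun p : ℝ × ℝ => (p.1 - p.2)/σ) ⁻¹' s) := hy
            show _ = LL σ τ₂ y * s.indicator 1 ((x - y)/σ)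
            rw [indicator_of_mem hmem, indicator_of_mem hy, Pi.one_apply, mul_one]
          · have hmem : y ∉ Prod.mk x ⁻¹' ((fun p : ℝ × ℝ => (p.1 - p.2)/σ) ⁻¹' s) := hy
            show _ = LL σ τ₂ y * s.indicator 1 ((x - y)/σ)
            rw [indicator_of_notMem hmem, indicator_of_notMem hy, mul_zero])]
      rw [lintegral_comp_affine hGmeas (ne_of_gt hσ) x, abs_of_pos hσ]
      congr 1
      apply lintegral_congr
      intro d
      rw [show (x - (x - σ*d))/σ = d by field_simp; ring]
    rw [lintegral_congr hslice,
      lintegral_withDensity_eq_lintegral_mul volume (LL_meas σ τ₁)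
        ((Measurable.lintegral_prod_right'
          (f := fun p : ℝ × ℝ => LL σ τ₂ (p.1 - σ*p.2) * s.indicator 1 p.2)
          (((LL_meas σ τ₂).comp (measurable_fst.sub (measurable_const.mul measurable_snd))).mul
            ((measurable_one.indicator hs).comp measurable_snd))).const_mul _)]
    have hmul : Measurable (fun p : ℝ × ℝ =>
        LL σ τ₁ p.1 * (LL σ τ₂ (p.1 - σ*p.2) * s.indicator 1 p.2)) :=
      ((LL_meas σ τ₁).comp measurable_fst).mul
        (((LL_meas σ τ₂).comp (measurable_fst.sub (measurable_const.mul measurable_snd))).mul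
          ((measurable_one.indicator hs).comp measurable_snd))
    calc ∫⁻ x, (LL σ τ₁ * fun x => ENNReal.ofReal σ *
            ∫⁻ d, LL σ τ₂ (x - σ*d) * s.indicator 1 d) x
        = ENNReal.ofReal σ * ∫⁻ x, ∫⁻ d, LL σ τ₁ x * (LL σ τ₂ (x - σ*d) * s.indicator 1 d) := by
          rw [← lintegral_const_mul' _ _ ENNReal.ofReal_ne_top]
          apply lintegral_congr
          intro x
          simp only [Pi.mul_apply]
          have hin : Measurable fun d : ℝ => LL σ τ₂ (x - σ*d) * s.indicator 1 d :=
            ((LL_meas σ τ₂).comp (measurable_const.sub (measurable_const.mul measurable_id))).mul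
              (measurable_one.indicator hs)
          rw [lintegral_const_mul (LL σ τ₁ x) hin]
          ring
      _ = ENNReal.ofReal σ * ∫⁻ d, ∫⁻ x, LL σ τ₁ x *
            (LL σ τ₂ (x - σ*d) * s.indicator 1 d) := by
          congr 1
          exact lintegral_lintegral_swap hmul.aemeasurable
      _ = ∫⁻ d, (ENNReal.ofReal σ * ∫⁻ x, LL σ τ₁ x * LL σ τ₂ (x - σ*d)) * s.indicator 1 d := by
          rw [← lintegral_const_mul' _ _ ENNReal.ofReal_ne_top]
          apply lintegral_congr
          intro d
          have hin2 : Measurable fun x : ℝ => LL σ τ₁ x * LL σ τ₂ (x - σ*d) :=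
            (LL_meas σ τ₁).mul ((LL_meas σ τ₂).comp (measurable_id.sub measurable_const))
          calc ENNReal.ofReal σ * ∫⁻ x, LL σ τ₁ x * (LL σ τ₂ (x - σ*d) * s.indicator 1 d)
              = ENNReal.ofReal σ *
                  ∫⁻ x, (LL σ τ₁ x * LL σ τ₂ (x - σ*d)) * s.indicator 1 d := by
                congr 1
                apply lintegral_congr
                intro x
                rw [mul_assoc]
            _ = ENNReal.ofReal σ *
                  ((∫⁻ x, LL σ τ₁ x * LL σ τ₂ (x - σ*d)) * s.indicator 1 d) := by
                rw [lintegral_mul_const _ hin2]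
            _ = (ENNReal.ofReal σ * ∫⁻ x, LL σ τ₁ x * LL σ τ₂ (x - σ*d)) * s.indicator 1 d := by
                rw [mul_assoc]
      _ = ∫⁻ d in s, ENNReal.ofReal σ * ∫⁻ x, LL σ τ₁ x * LL σ τ₂ (x - σ*d) := by
          rw [← lintegral_indicator hs]
          apply lintegral_congr
          intro d
          by_cases hd : d ∈ s
          · rw [indicator_of_mem hd, indicator_of_mem hd, Pi.one_apply, mul_one]
          · rw [indicator_of_notMem hd, indicator_of_notMem hd, mul_zero]
  have hDmeas : Measurable (fun δ => ENNReal.ofReal σ *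
      ∫⁻ x, LL σ τ₁ x * LL σ τ₂ (x - σ*δ)) :=
    measurable_const.mul (Measurable.lintegral_prod_right'
      (f := fun p : ℝ × ℝ => LL σ τ₁ p.2 * LL σ τ₂ (p.2 - σ*p.1))
      (((LL_meas σ τ₁).comp measurable_snd).mul
        ((LL_meas σ τ₂).comp (measurable_snd.sub (measurable_const.mul measurable_fst)))))
  have htot : ∫⁻ δ, (ENNReal.ofReal σ * ∫⁻ x, LL σ τ₁ x * LL σ τ₂ (x - σ*δ)) = 1 := by
    calc ∫⁻ δ, (ENNReal.ofReal σ * ∫⁻ x, LL σ τ₁ x * LL σ τ₂ (x - σ*δ))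
        = (volume.withDensity
            (fun δ => ENNReal.ofReal σ * ∫⁻ x, LL σ τ₁ x * LL σ τ₂ (x - σ*δ))) univ := by
          rw [withDensity_apply _ MeasurableSet.univ, Measure.restrict_univ]
      _ = ((volume.withDensity (LL σ τ₁)).prod (volume.withDensity (LL σ τ₂))) univ := by
          rw [← hD, Measure.map_apply hT MeasurableSet.univ, preimage_univ]
      _ = 1 := by
          rw [← univ_prod_univ, Measure.prod_prod,
            withDensity_apply _ MeasurableSet.univ, Measure.restrict_univ,
            withDensity_apply _ MeasurableSet.univ, Measure.restrict_univ,
            LL_total hσ hτ₁, LL_total hσ hτ₂, one_mul]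
  have hfin : ∀ᵐ δ, (ENNReal.ofReal σ * ∫⁻ x, LL σ τ₁ x * LL σ τ₂ (x - σ*δ)) ≠ ⊤ := by
    filter_upwards [ae_lt_top hDmeas (htot ▸ ENNReal.one_ne_top)] with δ h
    exact h.ne
  have hae : (fun δ => ENNReal.ofReal σ * ∫⁻ x, LL σ τ₁ x * LL σ τ₂ (x - σ*δ))
      =ᵐ[volume] fun δ => ENNReal.ofReal (piDelta τ₁ τ₂ δ) := by
    filter_upwards [hfin] with δ hδ
    have hval := D_val hσ hτ₁ hτ₂ δ
    rw [hval] at hδ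
    have hnn : 0 ≤ᵐ[volume.restrict (Ioi (0:ℝ))] fun w => gg w δ * fW τ₁ τ₂ w := by
      filter_upwards [ae_restrict_mem measurableSet_Ioi] with w hw
      exact mul_nonneg (gg_nonneg hw δ) (fW_nonneg hτ₁ hτ₂ w)
    have hqmeas : Measurable (fun w => gg w δ * fW τ₁ τ₂ w) :=
      (gg_meas.comp (measurable_id.prodMk measurable_const)).mul (fW_meas τ₁ τ₂)
    have hInt : IntegrableOn (fun w => gg w δ * fW τ₁ τ₂ w) (Ioi 0) := by
      refine ⟨hqmeas.aestronglyMeasurable.restrict, ?_⟩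
      rw [hasFiniteIntegral_iff_ofReal hnn]
      exact lt_top_iff_ne_top.mpr hδ
    have hpi : piDelta τ₁ τ₂ δ = ∫ w in Ioi (0:ℝ), gg w δ * fW τ₁ τ₂ w := rfl
    rw [hval, hpi, MeasureTheory.ofReal_integral_eq_lintegral_ofReal hInt hnn]
  rw [hmapeq, hD]
  exact withDensity_congr_ae hae
end

section
/- The function BF₁₂ⁿ(t) = (1 + t²/ν)^{-(ν+1)/2} / [ (1+n_δ)^{-1/2} (1 + t²/(ν(1+n_δ)))^{-(ν+1)/2} ] is strictly decreasing in |t|: for 0 ≤ t_1 < t_2, BF₁₂ⁿ(t_1) > BF₁₂ⁿ(t_2). -/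
open Real

/-- The Gaussian-prior Bayes factor BF₁₂ⁿ(t) is strictly
decreasing in |t|. -/
theorem gaussian_bayes_factor_strict_anti
    (ν : ℝ) (hν : 1 ≤ ν) (nδ : ℝ) (hnδ : 0 < nδ) :
    ∀ t₁ t₂ : ℝ, 0 ≤ t₁ → t₁ < t₂ →
      (1 + t₂ ^ 2 / ν) ^ (-(ν + 1) / 2) /
          ((1 + nδ) ^ (-(1 : ℝ) / 2) *
            (1 + t₂ ^ 2 / (ν * (1 + nδ))) ^ (-(ν + 1) / 2)) <
        (1 + t₁ ^ 2 / ν) ^ (-(ν + 1) / 2) /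
          ((1 + nδ) ^ (-(1 : ℝ) / 2) *
            (1 + t₁ ^ 2 / (ν * (1 + nδ))) ^ (-(ν + 1) / 2)) := by
  intro t₁ t₂ ht₁ h12
  have hν0 : (0:ℝ) < ν := lt_of_lt_of_le one_pos hν
  have hk0 : (0:ℝ) < 1 + nδ := by linarith
  have hνk : (0:ℝ) < ν * (1 + nδ) := by positivity
  have hx : t₁ ^ 2 < t₂ ^ 2 := by nlinarith
  have ha₁ : (0:ℝ) < 1 + t₁ ^ 2 / ν := by positivity
  have ha₂ : (0:ℝ) < 1 + t₂ ^ 2 / ν := by positivity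
  have hb₁ : (0:ℝ) < 1 + t₁ ^ 2 / (ν * (1 + nδ)) := by positivity
  have hb₂ : (0:ℝ) < 1 + t₂ ^ 2 / (ν * (1 + nδ)) := by positivity
  have hp : -(ν + 1) / 2 < 0 := by linarith
  have hc : (0:ℝ) < (1 + nδ) ^ (-(1 : ℝ) / 2) := rpow_pos_of_pos hk0 _
  have key : (1 + t₁ ^ 2 / ν) / (1 + t₁ ^ 2 / (ν * (1 + nδ))) <
      (1 + t₂ ^ 2 / ν) / (1 + t₂ ^ 2 / (ν * (1 + nδ))) := by
    rw [div_lt_div_iff₀ hb₁ hb₂]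
    have hν' : ν ≠ 0 := ne_of_gt hν0
    have hk' : (1 + nδ) ≠ 0 := ne_of_gt hk0
    field_simp
    nlinarith [mul_pos (mul_pos (mul_pos hν0 hnδ) (sub_pos.2 hx))
      (mul_pos (mul_pos hν0 hν0) hk0), mul_pos (mul_pos hν0 hnδ) (sub_pos.2 hx)]
  have hr : (0:ℝ) < (1 + t₁ ^ 2 / ν) / (1 + t₁ ^ 2 / (ν * (1 + nδ))) := by positivity
  have main : ((1 + t₂ ^ 2 / ν) / (1 + t₂ ^ 2 / (ν * (1 + nδ)))) ^ (-(ν + 1) / 2) <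
      ((1 + t₁ ^ 2 / ν) / (1 + t₁ ^ 2 / (ν * (1 + nδ)))) ^ (-(ν + 1) / 2) :=
    rpow_lt_rpow_of_neg hr key hp
  rw [div_rpow ha₁.le hb₁.le, div_rpow ha₂.le hb₂.le] at main
  have pb₁ : (0:ℝ) < (1 + t₁ ^ 2 / (ν * (1 + nδ))) ^ (-(ν + 1) / 2) :=
    rpow_pos_of_pos hb₁ _
  have pb₂ : (0:ℝ) < (1 + t₂ ^ 2 / (ν * (1 + nδ))) ^ (-(ν + 1) / 2) :=
    rpow_pos_of_pos hb₂ _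
  have e₁ : (1 + t₁ ^ 2 / ν) ^ (-(ν + 1) / 2) /
        ((1 + nδ) ^ (-(1 : ℝ) / 2) * (1 + t₁ ^ 2 / (ν * (1 + nδ))) ^ (-(ν + 1) / 2)) =
      ((1 + t₁ ^ 2 / ν) ^ (-(ν + 1) / 2) / (1 + t₁ ^ 2 / (ν * (1 + nδ))) ^ (-(ν + 1) / 2)) /
        (1 + nδ) ^ (-(1 : ℝ) / 2) := by
    rw [mul_comm, ← div_div]
  have e₂ : (1 + t₂ ^ 2 / ν) ^ (-(ν + 1) / 2) /
        ((1 + nδ) ^ (-(1 : ℝ) / 2) * (1 + t₂ ^ 2 / (ν * (1 + nδ))) ^ (-(ν + 1) / 2)) =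
      ((1 + t₂ ^ 2 / ν) ^ (-(ν + 1) / 2) / (1 + t₂ ^ 2 / (ν * (1 + nδ))) ^ (-(ν + 1) / 2)) /
        (1 + nδ) ^ (-(1 : ℝ) / 2) := by
    rw [mul_comm, ← div_div]
  rw [e₁, e₂]
  exact div_lt_div_of_pos_right main hc
end
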